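/- Let f : [t₀,∞) → [0,∞) be continuous. If there exists a nonnegative sequence (S_k)_{k≥k₀} with S_k → 0 satisfying S_k - S_{k+1} ≥ S_k² + f(k) for all k ≥ k₀, and f is nonincreasing, then f is recursively integrable (via the linear interpolation g of the sequence). -/

import Mathlib

open MeasureTheory Filter Set intervalIntegral Topology

/-- `f` is recursively integrable on `[t₀, ∞)`: for some `t₁ ≥ t₀`, the differential
equation `-g′(x) = g(x)² + f(x)` has a nonnegative solution `g` on `[t₁, ∞)`. -/
def RecInt (t₀ : ℝ) (f : ℝ → ℝ) : Prop :=
  ∃ t₁ : ℝ, t₀ ≤ t₁ ∧ ∃ g : ℝ → ℝ, (∀ x, t₁ ≤ x → 0 ≤ g x) ∧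
    ∀ x, t₁ ≤ x → HasDerivWithinAt g (-(g x ^ 2 + f x)) (Set.Ici t₁) x

/-- The step majorant `x ↦ S⌊x⌋₊ - S (⌊x⌋₊+1)`. -/
noncomputable def auxG (S : ℕ → ℝ) : ℝ → ℝ := fun x => S ⌊x⌋₊ - S (⌊x⌋₊ + 1)

/-- Picard-type iterates for the integral equation `g x = ∫_{t > x} (g t ^ 2 + f t)`. -/
noncomputable def auxSeq (f : ℝ → ℝ) (t₁ : ℝ) : ℕ → ℝ → ℝ
  | 0 => fun _ => 0
  | (n + 1) => fun x => ∫ t in Set.Ioi (max x t₁), ((auxSeq f t₁ n) t ^ 2 + f t)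

/-- (C1) with `t = 0` implies (A): a nonnegative sequence tending to `0` with
`S k - S (k+1) ≥ S k² + f k` yields recursive integrability of `f`. -/
theorem recInt_of_sequence (t₀ : ℝ) (f : ℝ → ℝ)
    (hfc : ContinuousOn f (Set.Ici t₀)) (hfm : AntitoneOn f (Set.Ici t₀))
    (hf0 : ∀ x, t₀ ≤ x → 0 ≤ f x)
    (k₀ : ℕ) (hk₀ : t₀ ≤ (k₀ : ℝ)) (S : ℕ → ℝ)
    (hS0 : ∀ k, k₀ ≤ k → 0 ≤ S k)
    (hlim : Filter.Tendsto S Filter.atTop (nhds 0))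
    (hS : ∀ k, k₀ ≤ k → S k ^ 2 + f k ≤ S k - S (k + 1)) :
    RecInt t₀ f := by
  classical
  set t₁ : ℝ := (k₀ : ℝ) with ht₁def
  have ht₀₁ : t₀ ≤ t₁ := hk₀
  set G : ℝ → ℝ := auxG S with hGdef
  -- basic facts about S
  have hGnat : ∀ k, k₀ ≤ k → 0 ≤ S k - S (k + 1) := by
    intro k hk
    have hfk : 0 ≤ f k := hf0 _ (le_trans hk₀ (Nat.cast_le.2 hk))
    nlinarith [hS k hk, sq_nonneg (S k)]
  have hSmono : ∀ m n, k₀ ≤ m → m ≤ n → S n ≤ S m := by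
    intro m n hm hmn
    induction n, hmn using Nat.le_induction with
    | base => exact le_rfl
    | succ n hmn ih =>
      have := hGnat n (le_trans hm hmn)
      linarith
  -- floor facts
  have hfl : ∀ x : ℝ, t₁ ≤ x → k₀ ≤ ⌊x⌋₊ ∧ ((⌊x⌋₊ : ℝ) ≤ x ∧ t₀ ≤ (⌊x⌋₊ : ℝ)) := by
    intro x hx
    have h0x : (0:ℝ) ≤ x := le_trans (Nat.cast_nonneg k₀) hx
    have h1 : k₀ ≤ ⌊x⌋₊ := Nat.le_floor hx
    exact ⟨h1, Nat.floor_le h0x, le_trans hk₀ (Nat.cast_le.2 h1)⟩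
  have hGmeas : Measurable G := by
    exact (measurable_from_nat.comp Nat.measurable_floor).sub
      ((measurable_from_nat (f := fun n => S (n+1))).comp Nat.measurable_floor)
  have hGnn : ∀ x, t₁ ≤ x → 0 ≤ G x := fun x hx => hGnat _ (hfl x hx).1
  have hGleS : ∀ x, t₁ ≤ x → G x ≤ S k₀ := by
    intro x hx
    have h1 := hS0 _ (le_trans (hfl x hx).1 (Nat.le_succ _))
    have h2 := hSmono k₀ ⌊x⌋₊ le_rfl (hfl x hx).1
    simp only [hGdef, auxG]; linarith
  -- G is a.e. constant on Ioc N (N+1)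
  have hIocC : ∀ N : ℕ, ∀ᵐ x ∂(volume : Measure ℝ),
      x ∈ Set.Ioc (N:ℝ) ((N:ℝ)+1) → G x = S N - S (N + 1) := by
    intro N
    refine ae_iff.2 (measure_mono_null ?_ (measure_singleton ((N:ℝ)+1)))
    intro x hx
    simp only [Set.mem_setOf_eq, _root_.not_imp] at hx
    obtain ⟨⟨h1, h2⟩, hne⟩ := hx
    by_contra hxx
    have hmem : x ∈ Set.Ico (N:ℝ) ((N:ℝ)+1) :=
      ⟨h1.le, lt_of_le_of_ne h2 (by simpa [Set.mem_singleton_iff] using hxx)⟩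
    have : ⌊x⌋₊ = N := by
      have := Nat.floor_eq_on_Ico N x (by exact_mod_cast hmem)
      exact this
    exact hne (by simp [hGdef, auxG, this])
  have hIocInt : ∀ N : ℕ, IntegrableOn G (Set.Ioc (N:ℝ) ((N:ℝ)+1)) := by
    intro N
    have hc : IntegrableOn (fun _ => S N - S (N + 1)) (Set.Ioc (N:ℝ) ((N:ℝ)+1)) :=
      integrableOn_const measure_Ioc_lt_top.ne
    have hae : G =ᶠ[ae (volume.restrict (Set.Ioc (N:ℝ) ((N:ℝ)+1)))]
        (fun _ => S N - S (N + 1)) := (ae_restrict_iff' measurableSet_Ioc).2 (hIocC N)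
    exact hc.congr hae.symm
  have hIocVal : ∀ N : ℕ, ∫ x in Set.Ioc (N:ℝ) ((N:ℝ)+1), G x = S N - S (N + 1) := by
    intro N
    rw [setIntegral_congr_ae measurableSet_Ioc (hIocC N)]
    simp [Real.volume_Ioc]
  -- integral over [m, N]
  have key : ∀ m N : ℕ, m ≤ N → IntegrableOn G (Set.Ioc (m:ℝ) (N:ℝ)) ∧
      ∫ x in (m:ℝ)..(N:ℝ), G x = S m - S N := by
    intro m N hmN
    induction N, hmN using Nat.le_induction with
    | base => simp
    | succ N hmN ih =>
      have hcast : ((N:ℝ)+1) = ((N+1 : ℕ) : ℝ) := by push_cast; ring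
      have hmNr : (m:ℝ) ≤ (N:ℝ) := by exact_mod_cast hmN
      have hunion : Set.Ioc (m:ℝ) ((N:ℝ)+1) = Set.Ioc (m:ℝ) (N:ℝ) ∪ Set.Ioc (N:ℝ) ((N:ℝ)+1) :=
        (Set.Ioc_union_Ioc_eq_Ioc hmNr (by linarith)).symm
      have hint : IntegrableOn G (Set.Ioc (m:ℝ) ((N:ℝ)+1)) := by
        rw [hunion]; exact ih.1.union (hIocInt N)
      constructor
      · rw [← hcast]; exact hint
      · have h1 : IntervalIntegrable G volume (m:ℝ) (N:ℝ) :=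
          (intervalIntegrable_iff_integrableOn_Ioc_of_le hmNr).2 ih.1
        have h2 : IntervalIntegrable G volume (N:ℝ) ((N:ℝ)+1) :=
          (intervalIntegrable_iff_integrableOn_Ioc_of_le (by linarith)).2 (hIocInt N)
        rw [← hcast, ← intervalIntegral.integral_add_adjacent_intervals h1 h2, ih.2,
          intervalIntegral.integral_of_le (by linarith : (N:ℝ) ≤ (N:ℝ)+1), hIocVal N]
        ring
  -- integrability on Ioi m and the bound for the full integral
  have hIoiInt : ∀ m : ℕ, k₀ ≤ m → IntegrableOn G (Set.Ioi (m:ℝ)) := by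
    intro m hm
    apply MeasureTheory.integrableOn_Ioi_of_intervalIntegral_norm_bounded (S m) (m:ℝ)
      (b := fun N : ℕ => (N:ℝ)) (l := atTop) ?_ tendsto_natCast_atTop_atTop ?_
    · intro N
      rcases le_or_gt m N with h | h
      · exact (key m N h).1
      · have : Set.Ioc (m:ℝ) (N:ℝ) = ∅ := Set.Ioc_eq_empty (by exact_mod_cast not_lt.2 h.le)
        rw [this]; exact integrableOn_empty
    · filter_upwards [eventually_ge_atTop m] with N hN
      have hmN : (m:ℝ) ≤ (N:ℝ) := by exact_mod_cast hN
      have hnorm : ∫ x in (m:ℝ)..(N:ℝ), ‖G x‖ = ∫ x in (m:ℝ)..(N:ℝ), G x := by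
        rw [intervalIntegral.integral_of_le hmN, intervalIntegral.integral_of_le hmN]
        refine setIntegral_congr_fun measurableSet_Ioc (fun x hx => ?_)
        exact Real.norm_of_nonneg (hGnn x (le_trans (Nat.cast_le.2 hm) hx.1.le))
      rw [hnorm, (key m N hN).2]
      have := hS0 N (le_trans hm hN)
      linarith
  have hIoiVal : ∀ m : ℕ, k₀ ≤ m → ∫ x in Set.Ioi (m:ℝ), G x ≤ S m := by
    intro m hm
    have ht := MeasureTheory.intervalIntegral_tendsto_integral_Ioi (m:ℝ) (hIoiInt m hm)
      (b := fun N : ℕ => (N:ℝ)) (l := atTop) tendsto_natCast_atTop_atTop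
    refine le_of_tendsto ht ?_
    filter_upwards [eventually_ge_atTop m] with N hN
    rw [(key m N hN).2]
    have := hS0 N (le_trans hm hN)
    linarith
  have hIoix : ∀ x : ℝ, t₁ ≤ x → IntegrableOn G (Set.Ioi x) ∧
      ∫ t in Set.Ioi x, G t ≤ S ⌊x⌋₊ := by
    intro x hx
    obtain ⟨h1, h2, _⟩ := hfl x hx
    have hint := hIoiInt ⌊x⌋₊ h1
    constructor
    · exact hint.mono_set (Set.Ioi_subset_Ioi h2)
    · refine le_trans (setIntegral_mono_set hint ?_ (HasSubset.Subset.eventuallyLE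
        (Set.Ioi_subset_Ioi h2))) (hIoiVal ⌊x⌋₊ h1)
      refine (ae_restrict_iff' measurableSet_Ioi).2 (ae_of_all _ (fun t ht => ?_))
      exact hGnn t (le_trans (Nat.cast_le.2 h1) (le_of_lt ht))
  -- pointwise domination
  have hdom : ∀ u : ℝ → ℝ, (∀ y, t₁ ≤ y → 0 ≤ u y ∧ u y ≤ S ⌊y⌋₊) →
      ∀ t, t₁ ≤ t → 0 ≤ u t ^ 2 + f t ∧ u t ^ 2 + f t ≤ G t := by
    intro u hu t ht
    obtain ⟨h1, h2, h3⟩ := hfl t ht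
    have hft : 0 ≤ f t := hf0 t (le_trans ht₀₁ ht)
    have hfle : f t ≤ f ⌊t⌋₊ := hfm h3 (le_trans ht₀₁ ht) h2
    have hu1 := (hu t ht).1
    have hu2 := (hu t ht).2
    have hsq : u t ^ 2 ≤ S ⌊t⌋₊ ^ 2 := pow_le_pow_left₀ hu1 hu2 2
    have := hS ⌊t⌋₊ h1
    constructor
    · positivity
    · simp only [hGdef, auxG]; nlinarith
  -- integrability of u² + f on Ioi x
  have hφm : ∀ u : ℝ → ℝ, Measurable u → ∀ x : ℝ, t₁ ≤ x →
      AEStronglyMeasurable (fun t => u t ^ 2 + f t) (volume.restrict (Set.Ioi x)) := by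
    intro u hu x hx
    have hsub : Set.Ioi x ⊆ Set.Ici t₀ := fun t ht => le_trans (le_trans ht₀₁ hx) ht.le
    exact ((hu.pow_const 2).aestronglyMeasurable).add
      ((hfc.mono hsub).aestronglyMeasurable measurableSet_Ioi)
  have hintφ : ∀ u : ℝ → ℝ, Measurable u → (∀ y, t₁ ≤ y → 0 ≤ u y ∧ u y ≤ S ⌊y⌋₊) →
      ∀ x : ℝ, t₁ ≤ x → IntegrableOn (fun t => u t ^ 2 + f t) (Set.Ioi x) := by
    intro u hu hb x hx
    refine (hIoix x hx).1.mono' (hφm u hu x hx) ?_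
    refine (ae_restrict_iff' measurableSet_Ioi).2 (ae_of_all _ (fun t ht => ?_))
    have htx : t₁ ≤ t := le_trans hx (le_of_lt ht)
    obtain ⟨hd1, hd2⟩ := hdom u hb t htx
    rw [Real.norm_of_nonneg hd1]; exact hd2
  -- the iterates
  set g_ : ℕ → ℝ → ℝ := auxSeq f t₁ with hgdef
  have hgsucc : ∀ n x, g_ (n+1) x = ∫ t in Set.Ioi (max x t₁), (g_ n t ^ 2 + f t) :=
    fun n x => rfl
  have hg0 : ∀ x, g_ 0 x = 0 := fun _ => rfl
  -- difference estimate for one iteration step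
  have hFlip : ∀ u : ℝ → ℝ, Measurable u → (∀ y, t₁ ≤ y → 0 ≤ u y ∧ u y ≤ S ⌊y⌋₊) →
      ∀ a b : ℝ, a ≤ b →
      0 ≤ (∫ t in Set.Ioi (max a t₁), (u t ^ 2 + f t)) -
          (∫ t in Set.Ioi (max b t₁), (u t ^ 2 + f t)) ∧
      (∫ t in Set.Ioi (max a t₁), (u t ^ 2 + f t)) -
          (∫ t in Set.Ioi (max b t₁), (u t ^ 2 + f t)) ≤ S k₀ * (b - a) := by
    intro u hu hb a b hab
    set ya := max a t₁ with hyad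
    set yb := max b t₁ with hybd
    have hya : t₁ ≤ ya := le_max_right _ _
    have hyb : t₁ ≤ yb := le_max_right _ _
    have hyab : ya ≤ yb := max_le_max hab le_rfl
    have hint1 := hintφ u hu hb ya hya
    have hint2 := hintφ u hu hb yb hyb
    have hintIoc : IntegrableOn (fun t => u t ^ 2 + f t) (Set.Ioc ya yb) :=
      hint1.mono_set Set.Ioc_subset_Ioi_self
    have hsplit : (∫ t in Set.Ioi ya, (u t ^ 2 + f t)) =
        (∫ t in Set.Ioc ya yb, (u t ^ 2 + f t)) + ∫ t in Set.Ioi yb, (u t ^ 2 + f t) := by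
      rw [← MeasureTheory.setIntegral_union Set.Ioc_disjoint_Ioi_same measurableSet_Ioi
        hintIoc hint2, Set.Ioc_union_Ioi_eq_Ioi hyab]
    have hnn : 0 ≤ ∫ t in Set.Ioc ya yb, (u t ^ 2 + f t) :=
      setIntegral_nonneg measurableSet_Ioc (fun t ht => (hdom u hb t (le_trans hya ht.1.le)).1)
    have hup : (∫ t in Set.Ioc ya yb, (u t ^ 2 + f t)) ≤ S k₀ * (b - a) := by
      have hc : IntegrableOn (fun _ => S k₀) (Set.Ioc ya yb) :=
        integrableOn_const measure_Ioc_lt_top.ne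
      have h1 : (∫ t in Set.Ioc ya yb, (u t ^ 2 + f t)) ≤ ∫ t in Set.Ioc ya yb, S k₀ := by
        refine setIntegral_mono_on hintIoc hc measurableSet_Ioc (fun t ht => ?_)
        have ht1 : t₁ ≤ t := le_trans hya ht.1.le
        exact le_trans (hdom u hb t ht1).2 (hGleS t ht1)
      have h2 : (∫ _t in Set.Ioc ya yb, S k₀) = (yb - ya) * S k₀ := by
        rw [setIntegral_const, Real.volume_real_Ioc_of_le (by linarith)]
        simp [smul_eq_mul]
      have h3 : yb - ya ≤ b - a := by
        have h4 : yb ≤ (b - a) + ya := by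
          apply max_le
          · linarith [le_max_left a t₁]
          · linarith [le_max_right a t₁]
        linarith
      have hK : (0:ℝ) ≤ S k₀ := hS0 k₀ le_rfl
      rw [h2] at h1
      nlinarith
    exact ⟨by linarith, by linarith⟩
  -- measurability and bounds for every iterate
  have hgP : ∀ n, Measurable (g_ n) ∧ ∀ y, t₁ ≤ y → 0 ≤ g_ n y ∧ g_ n y ≤ S ⌊y⌋₊ := by
    intro n
    induction n with
    | zero => exact ⟨measurable_const, fun y hy => ⟨le_rfl, hS0 _ (hfl y hy).1⟩⟩
    | succ n ih =>
      obtain ⟨hm, hb⟩ := ih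
      have hK : (0:ℝ) ≤ S k₀ := hS0 k₀ le_rfl
      constructor
      · have hlip : LipschitzWith ⟨S k₀, hK⟩ (g_ (n+1)) := by
          apply LipschitzWith.of_dist_le_mul
          intro p q
          rcases le_total p q with h | h
          · have h1 : 0 ≤ g_ (n+1) p - g_ (n+1) q := by
              rw [hgsucc n p, hgsucc n q]; exact (hFlip (g_ n) hm hb p q h).1
            have h2 : g_ (n+1) p - g_ (n+1) q ≤ S k₀ * (q - p) := by
              rw [hgsucc n p, hgsucc n q]; exact (hFlip (g_ n) hm hb p q h).2
            rw [Real.dist_eq, Real.dist_eq, abs_of_nonneg h1, abs_of_nonpos (by linarith)]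
            simp only [NNReal.coe_mk, neg_sub]
            exact h2
          · have h1 : 0 ≤ g_ (n+1) q - g_ (n+1) p := by
              rw [hgsucc n p, hgsucc n q]; exact (hFlip (g_ n) hm hb q p h).1
            have h2 : g_ (n+1) q - g_ (n+1) p ≤ S k₀ * (p - q) := by
              rw [hgsucc n p, hgsucc n q]; exact (hFlip (g_ n) hm hb q p h).2
            rw [Real.dist_eq, Real.dist_eq, abs_of_nonpos (by linarith), abs_of_nonneg (by linarith)]
            simp only [NNReal.coe_mk, neg_sub]
            exact h2
        exact hlip.continuous.measurable
      · intro y hy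
        have hmax : max y t₁ = y := max_eq_left hy
        rw [hgsucc n y, hmax]
        constructor
        · exact setIntegral_nonneg measurableSet_Ioi
            (fun t ht => (hdom (g_ n) hb t (le_trans hy (le_of_lt ht))).1)
        · calc (∫ t in Set.Ioi y, (g_ n t ^ 2 + f t)) ≤ ∫ t in Set.Ioi y, G t :=
              setIntegral_mono_on (hintφ (g_ n) hm hb y hy) ((hIoix y hy).1) measurableSet_Ioi
                (fun t ht => (hdom (g_ n) hb t (le_trans hy (le_of_lt ht))).2)
            _ ≤ S ⌊y⌋₊ := (hIoix y hy).2
  -- monotonicity on [t₁, ∞)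
  have hmono : ∀ n y, t₁ ≤ y → g_ n y ≤ g_ (n+1) y := by
    intro n
    induction n with
    | zero => intro y hy; rw [hg0]; exact ((hgP 1).2 y hy).1
    | succ n ih =>
      intro y hy
      rw [hgsucc n y, hgsucc (n+1) y]
      refine setIntegral_mono_on (hintφ (g_ n) (hgP n).1 (hgP n).2 _ (le_max_right _ _))
        (hintφ (g_ (n+1)) (hgP (n+1)).1 (hgP (n+1)).2 _ (le_max_right _ _)) measurableSet_Ioi
        (fun t ht => ?_)
      have ht1 : t₁ ≤ t := le_trans (le_max_right y t₁) (le_of_lt ht)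
      exact add_le_add_left (pow_le_pow_left₀ ((hgP n).2 t ht1).1 (ih t ht1) 2) _
  -- monotonicity everywhere
  have hmono' : ∀ x : ℝ, Monotone fun n => g_ n x := by
    intro x
    apply monotone_nat_of_le_succ
    intro n
    cases n with
    | zero =>
      show g_ 0 x ≤ g_ 1 x
      rw [hg0, hgsucc 0 x]
      exact setIntegral_nonneg measurableSet_Ioi
        (fun t ht => (hdom (g_ 0) (hgP 0).2 t (le_trans (le_max_right x t₁) (le_of_lt ht))).1)
    | succ n =>
      show g_ (n+1) x ≤ g_ (n+2) x
      rw [hgsucc n x, hgsucc (n+1) x]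
      refine setIntegral_mono_on (hintφ (g_ n) (hgP n).1 (hgP n).2 _ (le_max_right _ _))
        (hintφ (g_ (n+1)) (hgP (n+1)).1 (hgP (n+1)).2 _ (le_max_right _ _)) measurableSet_Ioi
        (fun t ht => ?_)
      have ht1 : t₁ ≤ t := le_trans (le_max_right x t₁) (le_of_lt ht)
      exact add_le_add_left (pow_le_pow_left₀ ((hgP n).2 t ht1).1 (hmono n t ht1) 2) _
  -- global upper bound
  have hflk : ⌊t₁⌋₊ = k₀ := Nat.floor_natCast k₀
  have hble : ∀ n x, g_ n x ≤ S k₀ := by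
    intro n x
    rcases le_total t₁ x with hx | hx
    · exact le_trans ((hgP n).2 x hx).2 (hSmono k₀ _ le_rfl (hfl x hx).1)
    · cases n with
      | zero => rw [hg0]; exact hS0 k₀ le_rfl
      | succ n =>
        have hxx : g_ (n+1) x = g_ (n+1) t₁ := by
          rw [hgsucc n x, hgsucc n t₁, max_eq_right hx, max_self]
        rw [hxx]
        have h := ((hgP (n+1)).2 t₁ le_rfl).2
        rwa [hflk] at h
  -- the limit function
  set glim : ℝ → ℝ := fun x => ⨆ n, g_ n x with hglimdef
  have hbdd : ∀ x : ℝ, BddAbove (Set.range fun n => g_ n x) := by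
    intro x
    refine ⟨S k₀, ?_⟩
    rintro v ⟨n, rfl⟩
    exact hble n x
  have htend : ∀ x, Tendsto (fun n => g_ n x) atTop (𝓝 (glim x)) := fun x =>
    tendsto_atTop_ciSup (hmono' x) (hbdd x)
  have hglim_meas : Measurable glim :=
    measurable_of_tendsto_metrizable (fun n => (hgP n).1) (tendsto_pi_nhds.2 htend)
  have hglim_b : ∀ y, t₁ ≤ y → 0 ≤ glim y ∧ glim y ≤ S ⌊y⌋₊ := by
    intro y hy
    constructor
    · have h := le_ciSup (hbdd y) 0
      exact le_trans (le_of_eq (hg0 y).symm) h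
    · exact ciSup_le (fun n => ((hgP n).2 y hy).2)
  have hglim_int : ∀ x, t₁ ≤ x → IntegrableOn (fun t => glim t ^ 2 + f t) (Set.Ioi x) :=
    fun x hx => hintφ glim hglim_meas hglim_b x hx
  -- the fixed-point equation
  have hfix : ∀ x, t₁ ≤ x → glim x = ∫ t in Set.Ioi x, (glim t ^ 2 + f t) := by
    intro x hx
    have h1 : Tendsto (fun n => g_ (n+1) x) atTop (𝓝 (glim x)) :=
      (htend x).comp (tendsto_add_atTop_nat 1)
    have h2 : Tendsto (fun n => ∫ t in Set.Ioi x, (g_ n t ^ 2 + f t)) atTop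
        (𝓝 (∫ t in Set.Ioi x, (glim t ^ 2 + f t))) := by
      refine tendsto_integral_of_dominated_convergence G (fun n => hφm (g_ n) (hgP n).1 x hx)
        (hIoix x hx).1 (fun n => ?_) ?_
      · refine (ae_restrict_iff' measurableSet_Ioi).2 (ae_of_all _ (fun t ht => ?_))
        have ht1 : t₁ ≤ t := le_trans hx (le_of_lt ht)
        obtain ⟨hd1, hd2⟩ := hdom (g_ n) (hgP n).2 t ht1
        rw [Real.norm_of_nonneg hd1]; exact hd2
      · exact ae_of_all _ (fun t => ((htend t).pow 2).add tendsto_const_nhds)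
    have h3 : (fun n => g_ (n+1) x) = fun n => ∫ t in Set.Ioi x, (g_ n t ^ 2 + f t) := by
      funext n; rw [hgsucc n x, max_eq_left hx]
    rw [h3] at h1
    exact tendsto_nhds_unique h1 h2
  -- difference formula
  have hsplit : ∀ a b : ℝ, t₁ ≤ a → a ≤ b →
      glim a - glim b = ∫ t in Set.Ioc a b, (glim t ^ 2 + f t) := by
    intro a b ha hab
    have hIb : t₁ ≤ b := le_trans ha hab
    have h1 : (∫ t in Set.Ioi a, (glim t ^ 2 + f t)) =
        (∫ t in Set.Ioc a b, (glim t ^ 2 + f t)) + ∫ t in Set.Ioi b, (glim t ^ 2 + f t) := by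
      rw [← MeasureTheory.setIntegral_union Set.Ioc_disjoint_Ioi_same measurableSet_Ioi
        ((hglim_int a ha).mono_set Set.Ioc_subset_Ioi_self) (hglim_int b hIb),
        Set.Ioc_union_Ioi_eq_Ioi hab]
    rw [hfix a ha, hfix b hIb]
    linarith
  -- continuity of the limit
  have hK : (0:ℝ) ≤ S k₀ := hS0 k₀ le_rfl
  have key2 : ∀ p q : ℝ, t₁ ≤ p → p ≤ q →
      0 ≤ glim p - glim q ∧ glim p - glim q ≤ S k₀ * (q - p) := by
    intro p q hp hpq
    rw [hsplit p q hp hpq]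
    constructor
    · exact setIntegral_nonneg measurableSet_Ioc
        (fun t ht => (hdom glim hglim_b t (le_trans hp ht.1.le)).1)
    · have hc : IntegrableOn (fun _ => S k₀) (Set.Ioc p q) :=
        integrableOn_const measure_Ioc_lt_top.ne
      have h1 : (∫ t in Set.Ioc p q, (glim t ^ 2 + f t)) ≤ ∫ _t in Set.Ioc p q, S k₀ :=
        setIntegral_mono_on ((hglim_int p hp).mono_set Set.Ioc_subset_Ioi_self) hc
          measurableSet_Ioc (fun t ht =>
            le_trans (hdom glim hglim_b t (le_trans hp ht.1.le)).2
              (hGleS t (le_trans hp ht.1.le)))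
      have h2 : (∫ _t in Set.Ioc p q, S k₀) = (q - p) * S k₀ := by
        rw [setIntegral_const, Real.volume_real_Ioc_of_le (by linarith)]
        simp [smul_eq_mul]
      rw [h2] at h1
      nlinarith
  have hglim_cont : ContinuousOn glim (Set.Ici t₁) := by
    have hlip : LipschitzOnWith ⟨S k₀, hK⟩ glim (Set.Ici t₁) := by
      refine lipschitzOnWith_iff_dist_le_mul.2 ?_
      intro p hp q hq
      rcases le_total p q with h | h
      · obtain ⟨h1, h2⟩ := key2 p q hp h
        rw [Real.dist_eq, Real.dist_eq, abs_of_nonneg h1, abs_of_nonpos (by linarith)]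
        simp only [NNReal.coe_mk, neg_sub]
        exact h2
      · obtain ⟨h1, h2⟩ := key2 q p hq h
        rw [Real.dist_eq, Real.dist_eq, abs_of_nonpos (by linarith), abs_of_nonneg (by linarith)]
        simp only [NNReal.coe_mk, neg_sub]
        exact h2
    exact hlip.continuousOn
  -- conclusion
  refine ⟨t₁, ht₀₁, glim, fun x hx => (hglim_b x hx).1, ?_⟩
  intro x hx
  have hφcont : ContinuousOn (fun t => glim t ^ 2 + f t) (Set.Ici t₁) :=
    (hglim_cont.pow 2).add (hfc.mono (Set.Ici_subset_Ici.2 ht₀₁))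
  have hglim_eq : ∀ y ∈ Set.Ici t₁, glim y =
      glim t₁ - ∫ t in t₁..y, (glim t ^ 2 + f t) := by
    intro y hy
    have h := hsplit t₁ y le_rfl hy
    rw [intervalIntegral.integral_of_le hy]
    linarith
  have haesm : AEStronglyMeasurable (fun t => glim t ^ 2 + f t)
      (volume.restrict (Set.Ioi t₁)) := hφm glim hglim_meas t₁ le_rfl
  have hDerivInt : HasDerivWithinAt (fun y => ∫ t in t₁..y, (glim t ^ 2 + f t))
      (glim x ^ 2 + f x) (Set.Ici t₁) x := by
    rcases eq_or_lt_of_le hx with heq | hlt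
    · subst heq
      have hmeas : StronglyMeasurableAtFilter (fun t => glim t ^ 2 + f t) (𝓝[>] t₁) volume :=
        ⟨Set.Ioi t₁, self_mem_nhdsWithin, haesm⟩
      have hfint : IntervalIntegrable (fun t => glim t ^ 2 + f t) volume t₁ t₁ :=
        (intervalIntegrable_iff_integrableOn_Ioc_of_le le_rfl).2 (by simp)
      have hcont : ContinuousWithinAt (fun t => glim t ^ 2 + f t) (Set.Ioi t₁) t₁ :=
        (hφcont t₁ Set.self_mem_Ici).mono Set.Ioi_subset_Ici_self
      exact intervalIntegral.integral_hasDerivWithinAt_right hfint hmeas hcont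
    · have hmeas : StronglyMeasurableAtFilter (fun t => glim t ^ 2 + f t) (𝓝 x) volume :=
        ⟨Set.Ioi t₁, Ioi_mem_nhds hlt, haesm⟩
      have hfint : IntervalIntegrable (fun t => glim t ^ 2 + f t) volume t₁ x :=
        (intervalIntegrable_iff_integrableOn_Ioc_of_le hx).2
          ((hglim_int t₁ le_rfl).mono_set Set.Ioc_subset_Ioi_self)
      have hcont : ContinuousAt (fun t => glim t ^ 2 + f t) x :=
        hφcont.continuousAt (Ici_mem_nhds hlt)
      exact (intervalIntegral.integral_hasDerivAt_right hfint hmeas hcont).hasDerivWithinAt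
  have hd : HasDerivWithinAt (fun y => glim t₁ - ∫ t in t₁..y, (glim t ^ 2 + f t))
      (-(glim x ^ 2 + f x)) (Set.Ici t₁) x := by
    exact hDerivInt.const_sub (glim t₁)
  exact hd.congr hglim_eq (hglim_eq x hx)
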